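/- arXiv:1805.09323 — 2 statements merged into one kernel-verified Lean document; each statement's English description precedes it below -/
import Mathlib

section
/- Let A be a Banach algebra with a bounded approximate identity (e_α) and X a left Banach A-module such that the module action map m_X : A ⊗ X → X is bounded. Then the kernel of the induced map on the projective tensor product equals the closed linear span of elements of the form (a·b) ⊗ x − a ⊗ (b·x) for a, b ∈ A and x ∈ X. -/
open Filter
open scoped TensorProduct Topology

/-- Let `A` be a Banach algebra with a bounded approximate identity
`(e_α)` and `X` a left Banach `A`-module, and let `E` be (a realization of) the completed
projective tensor product `A ⊗̂ X`: a Banach space with a dense linear embedding `j` of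
the algebraic tensor product satisfying the projective cross-norm bound, on which the
left multiplications `l_a ⊗ id` act with norm at most `‖a‖`. Then the kernel of the
induced map `m_X : A ⊗̂ X → X` of the module action equals
`N_X = closed span{(a·b) ⊗ x − a ⊗ (b·x) : a, b ∈ A, x ∈ X}`. -/
theorem kernel_module_action_eq_NX
    {A : Type*} [NormedRing A] [NormedAlgebra ℂ A] [CompleteSpace A]
    {X : Type*} [NormedAddCommGroup X] [NormedSpace ℂ X] [CompleteSpace X]
    [Module A X] [IsScalarTower ℂ A X]
    (hXbound : ∀ (a : A) (x : X), ‖a • x‖ ≤ ‖a‖ * ‖x‖)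
    -- bounded approximate identity (e_i) for A
    {ι : Type*} (l : Filter ι) [l.NeBot] (e : ι → A) (C : ℝ)
    (hbdd : ∀ i, ‖e i‖ ≤ C)
    (happrox : ∀ a : A, Tendsto (fun i => e i * a) l (𝓝 a))
    -- E realizes the completed projective tensor product A ⊗̂ X
    {E : Type*} [NormedAddCommGroup E] [NormedSpace ℂ E] [CompleteSpace E]
    (j : TensorProduct ℂ A X →ₗ[ℂ] E) (hdense : DenseRange j)
    (hcross : ∀ (a : A) (x : X), ‖j (a ⊗ₜ[ℂ] x)‖ ≤ ‖a‖ * ‖x‖)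
    -- the continuous extension m_X of the module action
    (mX : E →L[ℂ] X) (hmX : ∀ (a : A) (x : X), mX (j (a ⊗ₜ[ℂ] x)) = a • x)
    -- the continuous extensions l_a ⊗ id, of norm at most ‖a‖
    (L : A → E →L[ℂ] E)
    (hL : ∀ (a b : A) (x : X), L a (j (b ⊗ₜ[ℂ] x)) = j ((a * b) ⊗ₜ[ℂ] x))
    (hLnorm : ∀ a : A, ‖L a‖ ≤ ‖a‖) :
    {y : E | mX y = 0} =
      closure (Submodule.span ℂ
        {z : E | ∃ (a b : A) (x : X),
          z = j ((a * b) ⊗ₜ[ℂ] x) - j (a ⊗ₜ[ℂ] (b • x))} : Set E) := by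

  obtain ⟨i0⟩ := Filter.nonempty_of_neBot l
  have hC0 : (0:ℝ) ≤ C := le_trans (norm_nonneg _) (hbdd i0)
  set S : Set E := {z : E | ∃ (a b : A) (x : X),
      z = j ((a * b) ⊗ₜ[ℂ] x) - j (a ⊗ₜ[ℂ] (b • x))} with hS
  set N : Submodule ℂ E := (Submodule.span ℂ S).topologicalClosure with hNdef
  have hNclosed : IsClosed (N : Set E) := Submodule.isClosed_topologicalClosure _
  have hNeq : (N : Set E) = closure (Submodule.span ℂ S : Set E) :=
    Submodule.topologicalClosure_coe _
  rw [← hNeq]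
  -- convergence of L (e i) y to y
  have htens : ∀ t : TensorProduct ℂ A X,
      Tendsto (fun i => L (e i) (j t)) l (𝓝 (j t)) := by
    intro t
    induction t using TensorProduct.induction_on with
    | zero => simpa using (tendsto_const_nhds : Tendsto (fun _ : ι => (0:E)) l (𝓝 0))
    | tmul b x =>
      rw [tendsto_iff_norm_sub_tendsto_zero]
      have h1 : ∀ i, ‖L (e i) (j (b ⊗ₜ[ℂ] x)) - j (b ⊗ₜ[ℂ] x)‖
          ≤ ‖e i * b - b‖ * ‖x‖ := by
        intro i
        rw [hL]
        calc ‖j ((e i * b) ⊗ₜ[ℂ] x) - j (b ⊗ₜ[ℂ] x)‖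
            = ‖j ((e i * b - b) ⊗ₜ[ℂ] x)‖ := by
              rw [TensorProduct.sub_tmul, map_sub]
          _ ≤ ‖e i * b - b‖ * ‖x‖ := hcross _ _
      have h2 : Tendsto (fun i => ‖e i * b - b‖ * ‖x‖) l (𝓝 0) := by
        have := (tendsto_iff_norm_sub_tendsto_zero.mp (happrox b)).mul_const ‖x‖
        simpa using this
      exact squeeze_zero (fun i => norm_nonneg _) h1 h2
    | add s t hs ht =>
      have h := hs.add ht
      simpa [map_add] using h
  have hconv : ∀ y : E, Tendsto (fun i => L (e i) y) l (𝓝 y) := by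
    intro y
    rw [Metric.tendsto_nhds]
    intro ε hε
    have hδ : 0 < ε / (2 * (C + 2)) := by positivity
    obtain ⟨t, ht⟩ := hdense.exists_dist_lt y hδ
    have ht' : ‖y - j t‖ < ε / (2 * (C + 2)) := by rwa [dist_eq_norm] at ht
    have hev := (Metric.tendsto_nhds.mp (htens t)) (ε/2) (by positivity)
    filter_upwards [hev] with i hi
    rw [dist_eq_norm] at hi ⊢
    have hbnd : ‖L (e i) y - y‖
        ≤ ‖L (e i) (y - j t)‖ + ‖L (e i) (j t) - j t‖ + ‖j t - y‖ := by
      have heq : L (e i) y - y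
          = L (e i) (y - j t) + (L (e i) (j t) - j t) + (j t - y) := by
        rw [map_sub]; abel
      rw [heq]
      exact norm_add₃_le
    have h1 : ‖L (e i) (y - j t)‖ ≤ C * ‖y - j t‖ := by
      calc ‖L (e i) (y - j t)‖ ≤ ‖L (e i)‖ * ‖y - j t‖ := (L (e i)).le_opNorm _
        _ ≤ C * ‖y - j t‖ := by
            gcongr
            exact (hLnorm _).trans (hbdd i)
    have h3 : ‖j t - y‖ = ‖y - j t‖ := norm_sub_rev _ _
    have hCpos : (0:ℝ) < C + 2 := by linarith
    have h4 : (C+1) * ‖y - j t‖ ≤ (C+1) * (ε/(2*(C+2))) := by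
      apply mul_le_mul_of_nonneg_left (le_of_lt ht') (by linarith)
    have h5 : (C+1) * (ε/(2*(C+2))) ≤ ε/2 := by
      rw [show (C+1) * (ε / (2*(C+2))) = (C+1)*ε / (2*(C+2)) by ring,
        div_le_div_iff₀ (by positivity) (by norm_num : (0:ℝ) < 2)]
      nlinarith [hε]
    linarith [hbnd, h1, hi, h3, h4, h5]
  -- key: L a y - j (a ⊗ mX y) lies in N for every a, y
  have key : ∀ (a : A) (y : E), L a y - j (a ⊗ₜ[ℂ] mX y) ∈ N := by
    intro a
    let ja : X →L[ℂ] E := LinearMap.mkContinuous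
      (j.comp ((TensorProduct.mk ℂ A X) a)) ‖a‖ (fun x => by
        simpa using hcross a x)
    let F : E →L[ℂ] E := L a - ja.comp mX
    have hFapp : ∀ y : E, F y = L a y - j (a ⊗ₜ[ℂ] mX y) := by
      intro y
      simp [F, ja, ContinuousLinearMap.sub_apply, LinearMap.mkContinuous_apply]
    have hFj : ∀ t, F (j t) ∈ N := by
      intro t
      induction t using TensorProduct.induction_on with
      | zero =>
        have : F (j 0) = 0 := by rw [map_zero, map_zero]
        rw [this]; exact N.zero_mem
      | tmul b x =>
        have heq : F (j (b ⊗ₜ[ℂ] x)) = j ((a * b) ⊗ₜ[ℂ] x) - j (a ⊗ₜ[ℂ] (b • x)) := by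
          rw [hFapp, hL, hmX]
        rw [heq]
        exact Submodule.le_topologicalClosure _ (Submodule.subset_span ⟨a, b, x, rfl⟩)
      | add s t hs ht =>
        rw [map_add, map_add]
        exact N.add_mem hs ht
    intro y
    have hsub : Set.range j ⊆ F ⁻¹' (N : Set E) := by
      rintro _ ⟨t, rfl⟩; exact hFj t
    have hcl : closure (Set.range j) ⊆ F ⁻¹' (N : Set E) :=
      closure_minimal hsub (hNclosed.preimage F.continuous)
    have hy : F y ∈ N := hcl (by rw [hdense.closure_range]; trivial)
    rwa [hFapp] at hy
  ext y
  simp only [Set.mem_setOf_eq]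
  constructor
  · intro hy
    have h1 : ∀ i, L (e i) y ∈ N := by
      intro i
      have hk := key (e i) y
      rw [hy] at hk
      simpa using hk
    exact hNclosed.mem_of_tendsto (hconv y) (Eventually.of_forall h1)
  · intro hy
    have hSK : S ⊆ (LinearMap.ker (mX : E →ₗ[ℂ] X) : Set E) := by
      rintro z ⟨a, b, x, rfl⟩
      simp [LinearMap.mem_ker, hmX, mul_smul]
    have hspan : (Submodule.span ℂ S : Set E) ⊆ (LinearMap.ker (mX : E →ₗ[ℂ] X) : Set E) :=
      Submodule.span_le.mpr hSK
    have hclosed : IsClosed (LinearMap.ker (mX : E →ₗ[ℂ] X) : Set E) := by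
      have : (LinearMap.ker (mX : E →ₗ[ℂ] X) : Set E) = mX ⁻¹' {0} := by
        ext z; simp [LinearMap.mem_ker]
      rw [this]
      exact IsClosed.preimage mX.continuous isClosed_singleton
    have := closure_minimal hspan hclosed hy
    simpa [LinearMap.mem_ker] using this
end

section
/- ℓ¹(I) with pointwise multiplication is a Banach algebra, and the bounded linear functionals on ℓ¹(I) ⊗̂ ℓ¹(I) that annihilate the balanced subspace N = closed span{fg ⊗ h − f ⊗ gh} are exactly those of the form F(f ⊗ g) = Σ_i φ(i) f(i) g(i) for some φ ∈ ℓ^∞(I). Hence (ℓ¹(I) ⊗̂_{ℓ¹(I)} ℓ¹(I))* ≅ ℓ^∞(I) isometrically is identified via F ↦ (i ↦ F(δ_i ⊗ δ_i)). -/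
/-- `ℓ¹(I)` with pointwise multiplication is a Banach algebra, and a
bounded bilinear functional `B` on `ℓ¹(I) × ℓ¹(I)` (i.e. a functional on
`ℓ¹(I) ⊗̂ ℓ¹(I)`) annihilates the balanced subspace
`N = span{fg ⊗ h − f ⊗ gh}` if and only if it has the form
`B(f, g) = Σ_i φ(i) f(i) g(i)` for the bounded family `φ(i) = B(δ_i, δ_i)`, whose sup
norm is at most `‖B‖`; thus `(ℓ¹(I) ⊗̂_{ℓ¹(I)} ℓ¹(I))* ≅ ℓ∞(I)` via
`F ↦ (i ↦ F(δ_i ⊗ δ_i))`. -/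
theorem l1_module_dual_is_linfty
    {I : Type*} [DecidableEq I]
    (mul : lp (fun _ : I => ℂ) 1 → lp (fun _ : I => ℂ) 1 → lp (fun _ : I => ℂ) 1)
    (hmul : ∀ (f g : lp (fun _ : I => ℂ) 1) (i : I), mul f g i = f i * g i) :
    -- Banach algebra: pointwise multiplication is contractive
    (∀ f g : lp (fun _ : I => ℂ) 1, ‖mul f g‖ ≤ ‖f‖ * ‖g‖)
    ∧
    ∀ B : lp (fun _ : I => ℂ) 1 →L[ℂ] lp (fun _ : I => ℂ) 1 →L[ℂ] ℂ,
      -- the family φ(i) = B(δ_i ⊗ δ_i) is bounded by ‖B‖ (so lies in ℓ∞(I))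
      (∀ i : I,
        ‖B (lp.single 1 i (1 : ℂ)) (lp.single 1 i (1 : ℂ))‖ ≤ ‖B‖)
      ∧
      -- B annihilates N iff B(f,g) = Σ_i φ(i) f(i) g(i) with φ(i) = B(δ_i ⊗ δ_i)
      ((∀ f g h : lp (fun _ : I => ℂ) 1, B (mul f g) h = B f (mul g h))
        ↔
        (∀ f g : lp (fun _ : I => ℂ) 1,
          B f g = ∑' i : I,
            B (lp.single 1 i (1 : ℂ)) (lp.single 1 i (1 : ℂ)) * (f i * g i))) := by
  have hp1 : (0:ℝ) < (1:ENNReal).toReal := by norm_num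
  have hnorm : ∀ f : lp (fun _ : I => ℂ) 1, ‖f‖ = ∑' i, ‖f i‖ := by
    intro f
    rw [lp.norm_eq_tsum_rpow hp1]
    simp
  have hsum : ∀ f : lp (fun _ : I => ℂ) 1, Summable fun i => ‖f i‖ := by
    intro f
    have := (lp.memℓp f).summable hp1
    simpa using this
  have hδnorm : ∀ i : I, ‖(lp.single 1 i (1:ℂ) : lp (fun _ : I => ℂ) 1)‖ = 1 := by
    intro i
    have := lp.norm_single (E := fun _ : I => ℂ) (p := 1) zero_lt_one i (1:ℂ)
    simpa using this
  refine ⟨?_, ?_⟩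
  · intro f g
    rw [hnorm (mul f g), hnorm f]
    have h1 : ∀ i, ‖(mul f g : ∀ _ : I, ℂ) i‖ ≤ ‖f i‖ * ‖g‖ := by
      intro i
      rw [hmul, norm_mul]
      exact mul_le_mul_of_nonneg_left (lp.norm_apply_le_norm one_ne_zero g i) (norm_nonneg _)
    calc ∑' i, ‖(mul f g : ∀ _ : I, ℂ) i‖ ≤ ∑' i, ‖f i‖ * ‖g‖ := by
          refine Summable.tsum_le_tsum h1 ?_ ((hsum f).mul_right _)
          exact Summable.of_nonneg_of_le (fun i => norm_nonneg _) h1 ((hsum f).mul_right _)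
      _ = (∑' i, ‖f i‖) * ‖g‖ := tsum_mul_right
  intro B
  constructor
  · intro i
    have h1 := (B (lp.single 1 i (1:ℂ))).le_opNorm (lp.single 1 i (1:ℂ))
    have h2 := B.le_opNorm (lp.single 1 i (1:ℂ))
    rw [hδnorm, mul_one] at h1 h2
    exact h1.trans h2
  constructor
  · intro hB f g
    -- δ_i δ_j cross terms vanish
    have hδ : ∀ i j : I, j ≠ i →
        B (lp.single 1 i (1:ℂ)) (lp.single 1 j (1:ℂ)) = 0 := by
      intro i j hij
      have h0 : mul (lp.single 1 i (1:ℂ)) (lp.single 1 j (1:ℂ)) = 0 := by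
        apply lp.ext
        funext k
        rw [hmul]
        by_cases hk : k = i
        · subst hk
          rw [lp.single_apply_ne 1 j _ (fun h => hij h.symm)]
          simp
        · rw [lp.single_apply_ne 1 i _ hk]
          simp
      have h1 : mul (lp.single 1 j (1:ℂ)) (lp.single 1 j (1:ℂ)) = lp.single 1 j (1:ℂ) := by
        apply lp.ext
        funext k
        rw [hmul]
        by_cases hk : k = j
        · subst hk; simp [lp.single_apply_self]
        · rw [lp.single_apply_ne 1 j _ hk]; simp
      have := hB (lp.single 1 i (1:ℂ)) (lp.single 1 j (1:ℂ)) (lp.single 1 j (1:ℂ))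
      rw [h0, h1] at this
      simpa using this.symm
    have hsingle : ∀ (i : I) (c : ℂ), (lp.single 1 i c : lp (fun _ : I => ℂ) 1) = c • lp.single 1 i (1:ℂ) := by
      intro i c
      rw [← lp.single_smul]
      norm_num
    -- inner expansion
    have hinner : ∀ i : I, B (lp.single 1 i (1:ℂ)) g
        = g i * B (lp.single 1 i (1:ℂ)) (lp.single 1 i (1:ℂ)) := by
      intro i
      have hg := lp.hasSum_single (E := fun _ : I => ℂ) ENNReal.one_ne_top g
      have h2 := hg.mapL (B (lp.single 1 i (1:ℂ)))
      have h3 : HasSum (fun j => g j • B (lp.single 1 i (1:ℂ)) (lp.single 1 j (1:ℂ)))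
          (B (lp.single 1 i (1:ℂ)) g) := by
        refine h2.congr_fun fun j => ?_
        rw [hsingle j (g j), map_smul]
      rw [← h3.tsum_eq]
      rw [tsum_eq_single i]
      · simp [smul_eq_mul]
      · intro j hj
        rw [hδ i j hj]
        simp
    have hf := lp.hasSum_single (E := fun _ : I => ℂ) ENNReal.one_ne_top f
    have h4 := hf.mapL (B.flip g)
    have h5 : HasSum (fun i => B (lp.single 1 i (1:ℂ)) (lp.single 1 i (1:ℂ)) * (f i * g i))
        (B f g) := by
      refine h4.congr_fun fun i => ?_
      rw [hsingle i (f i), map_smul]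
      simp only [ContinuousLinearMap.coe_smul', Pi.smul_apply, ContinuousLinearMap.flip_apply,
        smul_eq_mul]
      rw [hinner i]
      ring
    exact h5.tsum_eq.symm
  · intro hF f g h
    rw [hF (mul f g) h, hF f (mul g h)]
    refine tsum_congr fun i => ?_
    rw [hmul, hmul]
    ring
end
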